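/- If a randomized mechanism A guarantees (λ, ε)-Rényi differential privacy with λ > 1, then for any 0 < δ < 1, A guarantees (ε + log(1/δ)/(λ−1), δ)-differential privacy. -/

import Mathlib

open scoped ENNReal

/-- Rényi divergence of order `l` between two discrete distributions,
`D_l(P‖Q) = (1/(l-1)) * log ∑ₓ P(x)^l * Q(x)^(1-l)`, with values in the
extended reals (it is `+∞` when `P` is not absolutely continuous w.r.t. `Q`). -/
noncomputable def renyiDiv {Ω : Type*} (l : ℝ) (P Q : PMF Ω) : EReal :=
  ((l - 1)⁻¹ : ℝ) * ENNReal.log (∑' x, P x ^ l * Q x ^ (1 - l))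

/-- **From RDP to (ε, δ)-DP.** If a randomized mechanism `A` guarantees
`(l, ε)`-Rényi differential privacy with `l > 1` (w.r.t. a neighboring
relation `Neighbor` on datasets), then for any `0 < δ < 1`, `A` guarantees
`(ε + log (1/δ) / (l - 1), δ)`-differential privacy. -/
theorem rdp_to_dp {X Ω : Type*} (Neighbor : X → X → Prop) (A : X → PMF Ω)
    (l ε δ : ℝ) (hl : 1 < l) (hδ0 : 0 < δ) (hδ1 : δ < 1)
    (hRDP : ∀ D D', Neighbor D D' → renyiDiv l (A D) (A D') ≤ (ε : EReal)) :
    ∀ D D', Neighbor D D' → ∀ S : Set Ω,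
      (A D).toOuterMeasure S ≤
        ENNReal.ofReal (Real.exp (ε + Real.log (1 / δ) / (l - 1))) *
          (A D').toOuterMeasure S + ENNReal.ofReal δ := by
  intro D D' hN S
  set P := A D with hP
  set Q := A D' with hQ
  set c : ℝ := Real.exp (ε + Real.log (1 / δ) / (l - 1)) with hc
  have hl0 : (0:ℝ) < l - 1 := by linarith
  have hcpos : 0 < c := Real.exp_pos _
  set T : ℝ≥0∞ := ∑' x, P x ^ l * Q x ^ (1 - l) with hT
  -- Step 1: bound on the moment sum coming from the RDP hypothesis
  have hS' : T ≤ ENNReal.ofReal (Real.exp ((l-1)*ε)) := by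
    have h : (((l - 1)⁻¹ : ℝ) : EReal) * ENNReal.log T ≤ (ε : EReal) := hRDP D D' hN
    rw [← ENNReal.log_le_log_iff, ENNReal.log_ofReal_of_pos (Real.exp_pos _), Real.log_exp]
    rcases eq_or_ne T ⊤ with hTtop | hTtop
    · rw [hTtop, ENNReal.log_top, EReal.coe_mul_top_of_pos (by positivity)] at h
      exact absurd h (by simp)
    rcases eq_or_ne T 0 with hT0 | hT0
    · rw [hT0, ENNReal.log_zero]; exact bot_le
    have hlog := ENNReal.log_pos_real hT0 hTtop
    rw [hlog] at h ⊢
    rw [← EReal.coe_mul, EReal.coe_le_coe_iff] at h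
    rw [EReal.coe_le_coe_iff]
    rw [inv_mul_le_iff₀ (by linarith)] at h
    linarith [h]
  -- the bad set
  set B : Set Ω := {x | ENNReal.ofReal c * Q x < P x} with hB
  -- key pointwise bound on the bad set
  have hkey : ∀ x ∈ B, P x * ENNReal.ofReal c ^ (l-1) ≤ P x ^ l * Q x ^ (1-l) := by
    intro x hx
    have hxlt : ENNReal.ofReal c * Q x < P x := hx
    have hPx0 : P x ≠ 0 := by
      intro h0; rw [h0] at hxlt; exact (not_lt.mpr zero_le) hxlt
    have hPxtop : P x ≠ ⊤ := PMF.apply_ne_top P x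
    have hPl : P x ^ l = P x * P x ^ (l-1) := by
      nth_rewrite 1 [show l = 1 + (l-1) by ring]
      rw [ENNReal.rpow_add _ _ hPx0 hPxtop, ENNReal.rpow_one]
    rcases eq_or_ne (Q x) 0 with hQ0 | hQ0
    · rw [hQ0, ENNReal.zero_rpow_of_neg (by linarith)]
      rw [ENNReal.mul_top (by
        simp [ENNReal.rpow_eq_zero_iff, hPx0, hPxtop])]
      exact le_top
    have hQtop : Q x ≠ ⊤ := PMF.apply_ne_top Q x
    have hQl0 : Q x ^ (l-1) ≠ 0 := by
      simp [ENNReal.rpow_eq_zero_iff, hQ0, hQtop]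
    have hQltop : Q x ^ (l-1) ≠ ⊤ := ENNReal.rpow_ne_top_of_nonneg hl0.le hQtop
    rw [show (1 - l) = -(l-1) by ring, ENNReal.rpow_neg, ← div_eq_mul_inv, hPl]
    rw [ENNReal.le_div_iff_mul_le (Or.inl hQl0) (Or.inl hQltop)]
    rw [mul_assoc]
    refine mul_le_mul_right ?_ _
    rw [← ENNReal.mul_rpow_of_nonneg _ _ hl0.le]
    exact ENNReal.rpow_le_rpow hxlt.le hl0.le
  -- bound the mass of the bad set by δ
  have hPB : (∑' x, Set.indicator B P x) ≤ ENNReal.ofReal δ := by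
    have h1 : (∑' x, Set.indicator B P x) * ENNReal.ofReal c ^ (l-1) ≤ T := by
      rw [← ENNReal.tsum_mul_right]
      refine ENNReal.tsum_le_tsum fun x => ?_
      by_cases hx : x ∈ B
      · rw [Set.indicator_of_mem hx]; exact hkey x hx
      · rw [Set.indicator_of_notMem hx]; simp
    have hK : ENNReal.ofReal c ^ (l-1) = ENNReal.ofReal (Real.exp ((l-1)*ε) * (1/δ)) := by
      rw [ENNReal.ofReal_rpow_of_pos hcpos, hc, ← Real.exp_mul]
      congr 1
      rw [show (ε + Real.log (1 / δ) / (l - 1)) * (l-1)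
          = (l-1)*ε + Real.log (1/δ) by field_simp]
      rw [Real.exp_add, Real.exp_log (by positivity)]
    have hK0 : ENNReal.ofReal (Real.exp ((l-1)*ε) * (1/δ)) ≠ 0 := by
      simp [ENNReal.ofReal_eq_zero, not_le]
      positivity
    have hKtop : ENNReal.ofReal (Real.exp ((l-1)*ε) * (1/δ)) ≠ ⊤ := ENNReal.ofReal_ne_top
    rw [hK] at h1
    have h2 : (∑' x, Set.indicator B P x)
        ≤ ENNReal.ofReal (Real.exp ((l-1)*ε)) / ENNReal.ofReal (Real.exp ((l-1)*ε) * (1/δ)) :=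
      (ENNReal.le_div_iff_mul_le (Or.inl hK0) (Or.inl hKtop)).mpr (h1.trans hS')
    refine h2.trans (le_of_eq ?_)
    rw [← ENNReal.ofReal_div_of_pos (by positivity)]
    congr 1
    field_simp
  -- bound on the good part
  have hgood : (∑' x, Set.indicator (S \ B) P x)
      ≤ ENNReal.ofReal c * ∑' x, Set.indicator S Q x := by
    rw [← ENNReal.tsum_mul_left]
    refine ENNReal.tsum_le_tsum fun x => ?_
    by_cases hx : x ∈ S \ B
    · rw [Set.indicator_of_mem hx, Set.indicator_of_mem hx.1]
      exact not_lt.mp hx.2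
    · rw [Set.indicator_of_notMem hx]; exact zero_le
  -- combine
  rw [PMF.toOuterMeasure_apply, PMF.toOuterMeasure_apply]
  calc (∑' x, Set.indicator S P x)
      ≤ ∑' x, (Set.indicator (S \ B) P x + Set.indicator B P x) := by
        refine ENNReal.tsum_le_tsum fun x => ?_
        by_cases hx : x ∈ S
        · rw [Set.indicator_of_mem hx]
          by_cases hxB : x ∈ B
          · rw [Set.indicator_of_mem hxB]; exact le_add_self
          · rw [Set.indicator_of_mem (Set.mem_diff_of_mem hx hxB)]; exact le_self_add
        · rw [Set.indicator_of_notMem hx]; exact zero_le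
    _ = (∑' x, Set.indicator (S \ B) P x) + ∑' x, Set.indicator B P x := ENNReal.tsum_add
    _ ≤ ENNReal.ofReal c * (∑' x, Set.indicator S Q x) + ENNReal.ofReal δ :=
        add_le_add hgood hPB
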